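/- Let f be convex and differentiable on 𝕊^n, and let X* minimize f over the spectrahedron S_n with δ := λ_{n-1}(∇f(X*)) − λ_n(∇f(X*)) > 0. Then for every X ∈ S_n, ‖X − X*‖_F² ≤ (2/δ)(f(X) − f(X*)). (Quadratic growth without strong convexity.) -/

import Mathlib

open Matrix
open scoped RealInnerProductSpace

noncomputable section

/-- Trace (Frobenius) inner product on real square matrices. -/
def tinner {n : ℕ} (A B : Matrix (Fin n) (Fin n) ℝ) : ℝ := ∑ i, ∑ j, A i j * B i j

/-- Squared Frobenius norm. -/
def frobSq {n : ℕ} (A : Matrix (Fin n) (Fin n) ℝ) : ℝ := ∑ i, ∑ j, (A i j)^2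

/-- Frobenius norm. -/
def frobNorm {n : ℕ} (A : Matrix (Fin n) (Fin n) ℝ) : ℝ := Real.sqrt (frobSq A)

/-- The spectrahedron: positive semidefinite matrices with unit trace. -/
def Spectra (n : ℕ) : Set (Matrix (Fin n) (Fin n) ℝ) :=
  {X | X.PosSemidef ∧ X.trace = 1}

/-- Eigenvalues of a symmetric matrix sorted in non-decreasing order, so that
`sortedEigs hA 0` is the smallest eigenvalue (λ_n in the paper's non-increasing
convention), `sortedEigs hA 1` is the second smallest (λ_{n-1}), and in general
`sortedEigs hA i = λ_{n-i}`. -/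
def sortedEigs {n : ℕ} {A : Matrix (Fin n) (Fin n) ℝ} (hA : A.IsHermitian) : Fin n → ℝ :=
  hA.eigenvalues ∘ Tuple.sort hA.eigenvalues

/- ---------- auxiliary lemmas ---------- -/

lemma star_mat_eq {m : ℕ} (A : Matrix (Fin m) (Fin m) ℝ) : star A = Aᵀ := by
  rw [Matrix.star_eq_conjTranspose, Matrix.conjTranspose_eq_transpose_of_trivial]

lemma tinner_eq_trace {m : ℕ} (A B : Matrix (Fin m) (Fin m) ℝ) :
    tinner A B = Matrix.trace (A * Bᵀ) := by
  simp [tinner, Matrix.trace, Matrix.mul_apply, Matrix.diag, Matrix.transpose_apply]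

lemma frobSq_eq_trace {m : ℕ} (A : Matrix (Fin m) (Fin m) ℝ) :
    frobSq A = Matrix.trace (A * Aᵀ) := by
  simp [frobSq, Matrix.trace, Matrix.mul_apply, Matrix.diag, Matrix.transpose_apply, sq]

lemma tinner_sub {m : ℕ} (A B C : Matrix (Fin m) (Fin m) ℝ) :
    tinner A (B - C) = tinner A B - tinner A C := by
  simp [tinner, Matrix.sub_apply, mul_sub, Finset.sum_sub_distrib]

lemma psd_diag_nonneg {m : ℕ} {Y : Matrix (Fin m) (Fin m) ℝ} (hY : Y.PosSemidef) (i : Fin m) :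
    0 ≤ Y i i := by
  have := hY.dotProduct_mulVec_nonneg (Pi.single i 1 : Fin m → ℝ)
  simpa [Matrix.mulVec_single, single_dotProduct] using this

lemma psd_entry_sq_le {m : ℕ} {Y : Matrix (Fin m) (Fin m) ℝ} (hY : Y.PosSemidef) (i j : Fin m) :
    (Y i j)^2 ≤ Y i i * Y j j := by
  have hsym : Y j i = Y i j := by
    conv_lhs => rw [← hY.1]
    simp [Matrix.conjTranspose_apply]
  have key : ∀ t : ℝ, 0 ≤ Y j j * (t * t) + (2 * Y i j) * t + Y i i := by
    intro t
    have := hY.dotProduct_mulVec_nonneg ((Pi.single i 1 : Fin m → ℝ) + t • (Pi.single j 1 : Fin m → ℝ))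
    simp only [star_trivial, Matrix.mulVec_add, Matrix.mulVec_smul, Matrix.mulVec_single,
      dotProduct_add, add_dotProduct, smul_dotProduct,
      single_dotProduct, dotProduct_smul, smul_eq_mul, mul_one] at this
    simp only [one_mul, MulOpposite.op_one, one_smul, Matrix.col_apply, hsym] at this
    nlinarith [this]
  have hd := discrim_le_zero key
  simp only [discrim] at hd
  nlinarith [hd]

lemma comb_eq {m : ℕ} (Xs X : Matrix (Fin m) (Fin m) ℝ) (t : ℝ) :
    (1 - t) • Xs + t • X = Xs + t • (X - Xs) := by
  rw [sub_smul, one_smul, smul_sub]; abel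

lemma grad_ineq {m : ℕ} (f : Matrix (Fin m) (Fin m) ℝ → ℝ) (hconv : ConvexOn ℝ Set.univ f)
    (Xs X : Matrix (Fin m) (Fin m) ℝ) (d : ℝ)
    (hd : HasDerivAt (fun t : ℝ => f (Xs + t • (X - Xs))) d 0) : d ≤ f X - f Xs := by
  have hsl := hasDerivAt_iff_tendsto_slope.mp hd
  have h2 : Filter.Tendsto (slope (fun t : ℝ => f (Xs + t • (X - Xs))) 0)
      (nhdsWithin 0 (Set.Ioi 0)) (nhds d) :=
    hsl.mono_left (nhdsWithin_mono 0 (fun x hx => ne_of_gt hx))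
  refine le_of_tendsto h2 ?_
  filter_upwards [Ioc_mem_nhdsGT (zero_lt_one)] with t ht
  have hmem := hconv.2 (Set.mem_univ Xs) (Set.mem_univ X)
    (by linarith [ht.2] : (0:ℝ) ≤ 1 - t) (le_of_lt ht.1) (by ring)
  rw [comb_eq] at hmem
  simp only [smul_eq_mul] at hmem
  rw [slope_def_field]
  have h0 : (fun t : ℝ => f (Xs + t • (X - Xs))) 0 = f Xs := by simp
  simp only [h0, sub_zero]
  rw [div_le_iff₀ ht.1]
  nlinarith [hmem]

lemma opt_ineq {m : ℕ} (f : Matrix (Fin m) (Fin m) ℝ → ℝ) (Xs W : Matrix (Fin m) (Fin m) ℝ)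
    (d : ℝ) (hd : HasDerivAt (fun t : ℝ => f (Xs + t • (W - Xs))) d 0)
    (hlow : ∀ t ∈ Set.Ioc (0:ℝ) 1, f Xs ≤ f (Xs + t • (W - Xs))) : 0 ≤ d := by
  have hsl := hasDerivAt_iff_tendsto_slope.mp hd
  have h2 : Filter.Tendsto (slope (fun t : ℝ => f (Xs + t • (W - Xs))) 0)
      (nhdsWithin 0 (Set.Ioi 0)) (nhds d) :=
    hsl.mono_left (nhdsWithin_mono 0 (fun x hx => ne_of_gt hx))
  refine ge_of_tendsto h2 ?_
  filter_upwards [Ioc_mem_nhdsGT (zero_lt_one)] with t ht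
  rw [slope_def_field]
  have h0 : (fun t : ℝ => f (Xs + t • (W - Xs))) 0 = f Xs := by simp
  simp only [h0, sub_zero]
  apply div_nonneg _ (le_of_lt ht.1)
  have := hlow t ht
  linarith [this]

lemma spectra_seg {m : ℕ} {A B : Matrix (Fin m) (Fin m) ℝ} (hA : A ∈ Spectra m)
    (hB : B ∈ Spectra m) {t : ℝ} (h0 : 0 ≤ t) (h1 : t ≤ 1) :
    (1 - t) • A + t • B ∈ Spectra m := by
  refine ⟨Matrix.PosSemidef.of_dotProduct_mulVec_nonneg ?_ ?_, ?_⟩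
  · simp only [Matrix.IsHermitian, Matrix.conjTranspose_add, Matrix.conjTranspose_smul]
    rw [hA.1.1.eq, hB.1.1.eq]
    norm_num
  · intro x
    have ha := hA.1.dotProduct_mulVec_nonneg x
    have hb := hB.1.dotProduct_mulVec_nonneg x
    simp only [Matrix.add_mulVec, Matrix.smul_mulVec, dotProduct_add,
      dotProduct_smul, smul_eq_mul]
    have : (0:ℝ) ≤ 1 - t := by linarith
    positivity
  · rw [Matrix.trace_add, Matrix.trace_smul, Matrix.trace_smul, hA.2, hB.2]
    simp

lemma frobSq_conj {m : ℕ} (U M : Matrix (Fin m) (Fin m) ℝ)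
    (hU1 : star U * U = 1) (hU2 : U * star U = 1) :
    frobSq (star U * M * U) = frobSq M := by
  rw [frobSq_eq_trace, frobSq_eq_trace]
  have hT : (star U * M * U)ᵀ = star U * Mᵀ * U := by
    rw [star_mat_eq]
    simp [Matrix.transpose_mul, Matrix.mul_assoc]
  rw [hT]
  have e1 : star U * M * U * (star U * Mᵀ * U) = star U * (M * Mᵀ) * U := by
    calc star U * M * U * (star U * Mᵀ * U)
        = star U * M * (U * star U) * Mᵀ * U := by simp [Matrix.mul_assoc]
      _ = star U * (M * Mᵀ) * U := by rw [hU2]; simp [Matrix.mul_assoc]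
  rw [e1, Matrix.trace_mul_cycle, hU2, Matrix.one_mul]

set_option maxHeartbeats 1000000 in
theorem stmt1 {n : ℕ} (f : Matrix (Fin (n+2)) (Fin (n+2)) ℝ → ℝ)
    (Gf : Matrix (Fin (n+2)) (Fin (n+2)) ℝ → Matrix (Fin (n+2)) (Fin (n+2)) ℝ)
    (hconv : ConvexOn ℝ Set.univ f)
    (hdiff : ∀ X H, HasDerivAt (fun t : ℝ => f (X + t • H)) (tinner (Gf X) H) 0)
    (Xs : Matrix (Fin (n+2)) (Fin (n+2)) ℝ) (hXs : Xs ∈ Spectra (n+2))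
    (hopt : ∀ X ∈ Spectra (n+2), f Xs ≤ f X)
    (hG : (Gf Xs).IsHermitian)
    (δ : ℝ) (hδ : δ = sortedEigs hG 1 - sortedEigs hG 0) (hδpos : 0 < δ) :
    ∀ X ∈ Spectra (n+2), frobSq (X - Xs) ≤ (2/δ) * (f X - f Xs) := by
  set U : Matrix (Fin (n+2)) (Fin (n+2)) ℝ := (hG.eigenvectorUnitary : Matrix (Fin (n+2)) (Fin (n+2)) ℝ) with hU
  set D : Matrix (Fin (n+2)) (Fin (n+2)) ℝ := Matrix.diagonal hG.eigenvalues with hD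
  have hU1 : star U * U = 1 := Matrix.mem_unitaryGroup_iff'.mp hG.eigenvectorUnitary.2
  have hU2 : U * star U = 1 := Matrix.mem_unitaryGroup_iff.mp hG.eigenvectorUnitary.2
  have hspec : Gf Xs = U * D * star U := by
    rw [hD, hU]
    simpa [Function.comp] using hG.spectral_theorem
  clear_value U
  have htr : ∀ M : Matrix (Fin (n+2)) (Fin (n+2)) ℝ, (star U * M * U).trace = M.trace := by
    intro M
    rw [Matrix.trace_mul_cycle, hU2, Matrix.one_mul]
  have hGM : ∀ M : Matrix (Fin (n+2)) (Fin (n+2)) ℝ,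
      (Gf Xs * M).trace = (D * (star U * M * U)).trace := by
    intro M
    rw [hspec]
    have e1 : U * D * star U * M = U * (D * (star U * M)) := by
      simp [Matrix.mul_assoc]
    rw [e1, Matrix.trace_mul_comm, Matrix.mul_assoc]
  have hDtr : ∀ Z : Matrix (Fin (n+2)) (Fin (n+2)) ℝ,
      (D * Z).trace = ∑ i, hG.eigenvalues i * Z i i := by
    intro Z
    simp [Matrix.trace, Matrix.diag, Matrix.mul_apply, hD, Matrix.diagonal_apply,
      ite_mul, Finset.sum_ite_eq, zero_mul]
  -- eigen-order facts
  set σ := Tuple.sort hG.eigenvalues with hσ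
  set k : Fin (n+2) := σ 0 with hk
  set μ : ℝ := hG.eigenvalues k with hμ
  have hmono : Monotone (hG.eigenvalues ∘ ⇑σ) := by
    rw [hσ]; exact Tuple.monotone_sort _
  have hse0 : sortedEigs hG 0 = μ := by
    rw [hμ, hk, hσ]; rfl
  have hse1 : sortedEigs hG 1 = (hG.eigenvalues ∘ ⇑σ) 1 := by
    rw [hσ]; rfl
  clear_value σ
  have hmin : ∀ j, μ ≤ hG.eigenvalues j := by
    intro j
    have h1 : (hG.eigenvalues ∘ σ) 0 ≤ (hG.eigenvalues ∘ σ) (σ.symm j) :=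
      hmono (Fin.zero_le _)
    simpa [hμ, hk] using h1
  have hgap : ∀ j, j ≠ k → μ + δ ≤ hG.eigenvalues j := by
    intro j hj
    have hi0 : σ.symm j ≠ 0 := by
      intro h
      apply hj
      rw [← σ.apply_symm_apply j, h, hk]
    have h1i : (1 : Fin (n+2)) ≤ σ.symm j := by
      rw [Fin.le_def]
      have : (σ.symm j).val ≠ 0 := fun h => hi0 (Fin.ext h)
      simp only [Fin.val_one]
      omega
    have h1 : (hG.eigenvalues ∘ σ) 1 ≤ (hG.eigenvalues ∘ σ) (σ.symm j) := hmono h1i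
    have h4 : (hG.eigenvalues ∘ σ) (σ.symm j) = hG.eigenvalues j := by simp
    rw [h4, ← hse1] at h1
    rw [hδ, hse0]
    linarith [h1]
  -- the matrix E = e_k e_kᵀ and W = U E U*
  set E : Matrix (Fin (n+2)) (Fin (n+2)) ℝ := Matrix.diagonal (Pi.single k 1) with hE
  have hEpsd : E.PosSemidef := by
    apply Matrix.PosSemidef.diagonal
    intro i
    by_cases h : i = k <;> simp [Pi.single_apply, h]
  have hEtr : E.trace = 1 := by
    simp [hE, Matrix.trace_diagonal]
  set W : Matrix (Fin (n+2)) (Fin (n+2)) ℝ := U * E * star U with hW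
  have hWpsd : W.PosSemidef := by
    rw [hW, Matrix.star_eq_conjTranspose]
    exact hEpsd.mul_mul_conjTranspose_same U
  have hWtr : W.trace = 1 := by
    rw [hW, Matrix.trace_mul_cycle, hU1, Matrix.one_mul, hEtr]
  have hWmem : W ∈ Spectra (n+2) := ⟨hWpsd, hWtr⟩
  have hconjW : star U * W * U = E := by
    calc star U * (U * E * star U) * U
        = (star U * U) * E * (star U * U) := by simp [Matrix.mul_assoc]
      _ = E := by rw [hU1]; simp
  have hDEtr : (D * E).trace = μ := by
    rw [hDtr]
    rw [hE]
    simp [Matrix.diagonal_apply_eq, Pi.single_apply, mul_ite, Finset.sum_ite_eq', hμ]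
  -- symmetric transposes
  have hsymT : ∀ M : Matrix (Fin (n+2)) (Fin (n+2)) ℝ, M.PosSemidef → Mᵀ = M := by
    intro M hM
    rw [← Matrix.conjTranspose_eq_transpose_of_trivial]
    exact hM.1
  -- tinner with G via diagonal
  have htG : ∀ M : Matrix (Fin (n+2)) (Fin (n+2)) ℝ, Mᵀ = M →
      tinner (Gf Xs) M = ∑ i, hG.eigenvalues i * (star U * M * U) i i := by
    intro M hM
    rw [tinner_eq_trace, hM, hGM, hDtr]
  -- tinner G W = μ
  have htGW : tinner (Gf Xs) W = μ := by
    rw [tinner_eq_trace, hsymT W hWpsd, hGM, hconjW, hDEtr]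
  -- key lower bound for PSD trace-one matrices, in eigen-coordinates
  have key : ∀ Z : Matrix (Fin (n+2)) (Fin (n+2)) ℝ, Z.PosSemidef → Z.trace = 1 →
      (μ + δ * (1 - Z k k) ≤ ∑ i, hG.eigenvalues i * Z i i ∧ Z k k ≤ 1) := by
    intro Z hZ hZtr
    have hts : ∑ i, Z i i = 1 := by
      rw [← hZtr]; rfl
    have hall := Finset.sum_erase_add Finset.univ (fun i => Z i i) (Finset.mem_univ k)
    have hs : Z k k + ∑ i ∈ Finset.univ.erase k, Z i i = 1 := by
      linarith [hall, hts]
    have hnn : (0:ℝ) ≤ ∑ i ∈ Finset.univ.erase k, Z i i :=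
      Finset.sum_nonneg fun i _ => psd_diag_nonneg hZ i
    constructor
    · have hsum : ∑ i, hG.eigenvalues i * Z i i
          = hG.eigenvalues k * Z k k + ∑ i ∈ Finset.univ.erase k, hG.eigenvalues i * Z i i := by
        have h5 := Finset.sum_erase_add Finset.univ
          (fun i => hG.eigenvalues i * Z i i) (Finset.mem_univ k)
        linarith [h5]
      have hbound : ∑ i ∈ Finset.univ.erase k, (μ + δ) * Z i i
          ≤ ∑ i ∈ Finset.univ.erase k, hG.eigenvalues i * Z i i := by
        apply Finset.sum_le_sum
        intro i hi
        have hik : i ≠ k := (Finset.mem_erase.mp hi).1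
        exact mul_le_mul_of_nonneg_right (hgap i hik) (psd_diag_nonneg hZ i)
      rw [hsum]
      have : ∑ i ∈ Finset.univ.erase k, (μ + δ) * Z i i
          = (μ + δ) * (1 - Z k k) := by
        rw [← Finset.mul_sum]
        have : ∑ i ∈ Finset.univ.erase k, Z i i = 1 - Z k k := by linarith [hs]
        rw [this]
      rw [this] at hbound
      rw [← hμ]
      nlinarith [hbound]
    · linarith [hs, hnn]
  -- first order optimality at Xs gives tinner G Xs ≤ μ
  have hfoW : 0 ≤ tinner (Gf Xs) (W - Xs) := by
    apply opt_ineq f Xs W _ (hdiff Xs (W - Xs))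
    intro t ht
    rw [← comb_eq]
    exact hopt _ (spectra_seg hXs hWmem (le_of_lt ht.1) ht.2)
  have htGXs_le : tinner (Gf Xs) Xs ≤ μ := by
    rw [tinner_sub, htGW] at hfoW
    linarith [hfoW]
  -- Ys = star U Xs U equals E
  set Ys : Matrix (Fin (n+2)) (Fin (n+2)) ℝ := star U * Xs * U with hYs
  have hYspsd : Ys.PosSemidef := by
    rw [hYs, Matrix.star_eq_conjTranspose]
    exact hXs.1.conjTranspose_mul_mul_same U
  have hYstr : Ys.trace = 1 := by
    rw [hYs, htr]; exact hXs.2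
  have htGXs : tinner (Gf Xs) Xs = ∑ i, hG.eigenvalues i * Ys i i := by
    rw [htG Xs (hsymT Xs hXs.1)]
  have hYkey := key Ys hYspsd hYstr
  have hYskk : Ys k k = 1 := by
    have h1 : μ + δ * (1 - Ys k k) ≤ μ := by
      calc μ + δ * (1 - Ys k k) ≤ ∑ i, hG.eigenvalues i * Ys i i := hYkey.1
        _ = tinner (Gf Xs) Xs := htGXs.symm
        _ ≤ μ := htGXs_le
    nlinarith [hYkey.2, h1, hδpos]
  have hYsdiag : ∀ i, i ≠ k → Ys i i = 0 := by
    intro i hik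
    have hts : ∑ j, Ys j j = 1 := by rw [← hYstr]; rfl
    have hall := Finset.sum_erase_add Finset.univ (fun j => Ys j j) (Finset.mem_univ k)
    have hs : Ys k k + ∑ j ∈ Finset.univ.erase k, Ys j j = 1 := by
      linarith [hall, hts]
    have h0 : ∑ j ∈ Finset.univ.erase k, Ys j j = 0 := by
      rw [hYskk] at hs; linarith
    have := (Finset.sum_eq_zero_iff_of_nonneg
      (fun j _ => psd_diag_nonneg hYspsd j)).mp h0 i
    exact this (Finset.mem_erase.mpr ⟨hik, Finset.mem_univ i⟩)
  have hYsE : Ys = E := by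
    ext i j
    by_cases hik : i = k <;> by_cases hjk : j = k
    · rw [hik, hjk, hYskk, hE, Matrix.diagonal_apply_eq]
      simp
    · -- i = k, j ≠ k : entry zero
      have hsq := psd_entry_sq_le hYspsd i j
      rw [hYsdiag j hjk, mul_zero] at hsq
      have hz : Ys i j = 0 := by nlinarith [sq_nonneg (Ys i j), hsq]
      have hij : i ≠ j := by rw [hik]; exact fun h => hjk h.symm
      rw [hz, hE, Matrix.diagonal_apply_ne _ hij]
    · have hsq := psd_entry_sq_le hYspsd i j
      rw [hYsdiag i hik, zero_mul] at hsq
      have hz : Ys i j = 0 := by nlinarith [sq_nonneg (Ys i j), hsq]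
      have hij : i ≠ j := by rw [hjk]; exact hik
      rw [hz, hE, Matrix.diagonal_apply_ne _ hij]
    · have hsq := psd_entry_sq_le hYspsd i j
      rw [hYsdiag i hik, zero_mul] at hsq
      have hz : Ys i j = 0 := by nlinarith [sq_nonneg (Ys i j), hsq]
      rw [hz, hE]
      by_cases hij : i = j
      · rw [hij, Matrix.diagonal_apply_eq]
        rw [← hij]
        simp [Pi.single_apply, hik]
      · rw [Matrix.diagonal_apply_ne _ hij]
  have hXsrec : U * Ys * star U = Xs := by
    rw [hYs]
    calc U * (star U * Xs * U) * star U
        = (U * star U) * Xs * (U * star U) := by simp [Matrix.mul_assoc]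
      _ = Xs := by rw [hU2]; simp
  have hXsW : Xs = W := by
    rw [← hXsrec, hYsE, hW]
  have htGXs_eq : tinner (Gf Xs) Xs = μ := by
    nth_rewrite 2 [hXsW]
    exact htGW
  -- main part
  intro X hX
  set Y : Matrix (Fin (n+2)) (Fin (n+2)) ℝ := star U * X * U with hY
  have hYpsd : Y.PosSemidef := by
    rw [hY, Matrix.star_eq_conjTranspose]
    exact hX.1.conjTranspose_mul_mul_same U
  have hYtr : Y.trace = 1 := by rw [hY, htr]; exact hX.2
  have hYkey := key Y hYpsd hYtr
  -- gradient inequality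
  have hgrad : tinner (Gf Xs) (X - Xs) ≤ f X - f Xs :=
    grad_ineq f hconv Xs X _ (hdiff Xs (X - Xs))
  have htGX : tinner (Gf Xs) X = ∑ i, hG.eigenvalues i * Y i i := htG X (hsymT X hX.1)
  have hlow : δ * (1 - Y k k) ≤ f X - f Xs := by
    have h1 : μ + δ * (1 - Y k k) ≤ tinner (Gf Xs) X := by
      rw [htGX]; exact hYkey.1
    have h2 : tinner (Gf Xs) (X - Xs) = tinner (Gf Xs) X - μ := by
      rw [tinner_sub, htGXs_eq]
    linarith [hgrad, h1, h2 ▸ hgrad]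
  -- Frobenius bound
  have hfrob1 : frobSq (X - Xs) = frobSq (Y - E) := by
    have : Y - E = star U * (X - Xs) * U := by
      rw [hY, ← hYsE, hYs]
      simp [Matrix.mul_sub, Matrix.sub_mul]
    rw [this, frobSq_conj _ _ hU1 hU2]
  have hYE : ∑ i, ∑ j, Y i j * E i j = Y k k := by
    have : ∀ i, ∑ j, Y i j * E i j = Y i i * (Pi.single k 1 : Fin (n+2) → ℝ) i := by
      intro i
      rw [hE]
      simp [Matrix.diagonal_apply, mul_ite, Finset.sum_ite_eq]
    rw [Finset.sum_congr rfl (fun i _ => this i)]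
    simp [Pi.single_apply, mul_ite, Finset.sum_ite_eq']
  have hEE : frobSq E = 1 := by
    rw [hE, frobSq]
    have : ∀ i, ∑ j, ((Matrix.diagonal (Pi.single k 1) : Matrix (Fin (n+2)) (Fin (n+2)) ℝ) i j)^2
        = ((Pi.single k 1 : Fin (n+2) → ℝ) i)^2 := by
      intro i
      simp [Matrix.diagonal_apply, ite_pow, Finset.sum_ite_eq]
    rw [Finset.sum_congr rfl (fun i _ => this i)]
    simp [Pi.single_apply, ite_pow, Finset.sum_ite_eq']
  have hfrob2 : frobSq (Y - E) = frobSq Y - 2 * Y k k + 1 := by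
    have hexp : ∀ i j, ((Y - E) i j)^2 = (Y i j)^2 - 2 * (Y i j * E i j) + (E i j)^2 := by
      intro i j
      simp only [Matrix.sub_apply]
      ring
    calc frobSq (Y - E) = ∑ i, ∑ j, ((Y i j)^2 - 2 * (Y i j * E i j) + (E i j)^2) := by
          rw [frobSq]
          exact Finset.sum_congr rfl fun i _ => Finset.sum_congr rfl fun j _ => hexp i j
      _ = (∑ i, ∑ j, (Y i j)^2) - 2 * (∑ i, ∑ j, Y i j * E i j) + ∑ i, ∑ j, (E i j)^2 := by
          simp [Finset.sum_add_distrib, Finset.sum_sub_distrib, Finset.mul_sum]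
      _ = frobSq Y - 2 * Y k k + 1 := by
          rw [hYE]
          have h2 : ∑ i, ∑ j, (E i j)^2 = 1 := hEE
          rw [h2]
          rfl
  have hfrobY : frobSq Y ≤ 1 := by
    have h1 : frobSq Y ≤ ∑ i, ∑ j, Y i i * Y j j :=
      Finset.sum_le_sum fun i _ => Finset.sum_le_sum fun j _ => psd_entry_sq_le hYpsd i j
    have h2 : ∑ i : Fin (n+2), ∑ j : Fin (n+2), Y i i * Y j j = (∑ i, Y i i) * (∑ j, Y j j) := by
      rw [Finset.sum_mul_sum]
    have h3 : ∑ i, Y i i = 1 := by rw [← hYtr]; rfl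
    rw [h2, h3] at h1
    simpa using h1
  have hfrob : frobSq (X - Xs) ≤ 2 * (1 - Y k k) := by
    rw [hfrob1, hfrob2]
    linarith [hfrobY]
  -- conclusion
  rw [div_mul_eq_mul_div, le_div_iff₀ hδpos]
  have h1mY : 0 ≤ 1 - Y k k := by linarith [hYkey.2]
  nlinarith [hfrob, hlow, hδpos, h1mY]
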